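/- Let 0 < q ≤ 1 and p ≥ max{1−q, (2−q)/3}. Then ρ_{p,q}(x,y) = |x−y| / A_p(|x|,|y|)^q is a metric on ℝⁿ (with ρ_{p,q}(0,0) := 0 when needed). -/

import Mathlib

open Real Set

section Aux14


lemma aux14_exp1 {c : ℝ} (hc0 : 0 ≤ c) (hc1 : c ≤ 1) {x : ℝ} (hx : 0 ≤ x) :
    exp (c*x) - exp (-(c*x)) ≤ c * (exp x - exp (-x)) := by
  set f : ℝ → ℝ := fun y => c * (exp y - exp (-y)) - (exp (c*y) - exp (-(c*y))) with hf
  have hder : ∀ y : ℝ, HasDerivAt f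
      (c * (exp y + exp (-y)) - (c * exp (c*y) + c * exp (-(c*y)))) y := by
    intro y
    have h1 : HasDerivAt (fun y : ℝ => exp y) (exp y) y := Real.hasDerivAt_exp y
    have h2 : HasDerivAt (fun y : ℝ => exp (-y)) (-exp (-y)) y := by
      simpa [Function.comp_def] using (Real.hasDerivAt_exp (-y)).comp y (hasDerivAt_neg y)
    have h3 : HasDerivAt (fun y : ℝ => exp (c*y)) (c * exp (c*y)) y := by
      simpa [mul_comm, Function.comp_def] using (Real.hasDerivAt_exp (c*y)).comp y
        ((hasDerivAt_id y).const_mul c)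
    have h4 : HasDerivAt (fun y : ℝ => exp (-(c*y))) (-(c * exp (-(c*y)))) y := by
      have h0 : HasDerivAt (fun y : ℝ => -(c*y)) (-c) y := by
        simpa [Pi.neg_def] using ((hasDerivAt_id y).const_mul c).neg
      simpa [mul_comm, Function.comp_def] using (Real.hasDerivAt_exp (-(c*y))).comp y h0
    have := ((h1.sub h2).const_mul c).sub (h3.sub h4)
    refine this.congr_deriv ?_
    ring
  have hmono : MonotoneOn f (Ici (0:ℝ)) := by
    apply monotoneOn_of_deriv_nonneg (convex_Ici 0)
    · exact (Continuous.continuousOn (by continuity))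
    · intro y _
      exact (hder y).differentiableAt.differentiableWithinAt
    · intro y hy
      rw [interior_Ici] at hy
      rw [(hder y).deriv]
      have hy0 : 0 ≤ y := le_of_lt hy
      have e1 : exp y * exp (-(y + c*y)) = exp (-(c*y)) := by
        rw [← exp_add]; congr 1; ring
      have e2 : exp (c*y) * exp (-(y + c*y)) = exp (-y) := by
        rw [← exp_add]; congr 1; ring
      have key : 0 ≤ (exp y - exp (c*y)) * (1 - exp (-(y + c*y))) := by
        apply mul_nonneg
        · have : c * y ≤ y := by nlinarith
          simpa using exp_le_exp.2 this
        · have h5 : -(y + c*y) ≤ 0 := by nlinarith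
          have := exp_le_one_iff.2 h5
          linarith
      have expand : (exp y - exp (c*y)) * (1 - exp (-(y + c*y)))
          = exp y + exp (-y) - exp (c*y) - exp (-(c*y)) := by
        linear_combination -e1 + e2
      nlinarith [key, hc0]
  have h0 : f 0 ≤ f x := hmono (self_mem_Ici) hx hx
  have hz : f 0 = 0 := by simp [hf]
  rw [hz] at h0
  simp only [hf] at h0
  linarith

lemma aux14_exp2 {c A B : ℝ} (hc0 : 0 ≤ c) (hc1 : c ≤ 1) (hAB : A ≤ B) :
    exp (-(c*A)) - exp (-(c*B)) ≤ c * exp ((-((1+c)/2))*(A+B)) * (exp B - exp A) := by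
  have key := aux14_exp1 hc0 hc1 (show (0:ℝ) ≤ (B-A)/2 by linarith)
  have hK : (0:ℝ) < exp (-(c*(A+B)/2)) := exp_pos _
  have hmul := mul_le_mul_of_nonneg_left key hK.le
  have eA1 : exp (-(c*(A+B)/2)) * exp (c*((B-A)/2)) = exp (-(c*A)) := by
    rw [← exp_add]; congr 1; ring
  have eA2 : exp (-(c*(A+B)/2)) * exp (-(c*((B-A)/2))) = exp (-(c*B)) := by
    rw [← exp_add]; congr 1; ring
  have eB1 : exp (-(c*(A+B)/2)) * exp ((B-A)/2) = exp ((-((1+c)/2))*(A+B)) * exp B := by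
    rw [← exp_add, ← exp_add]; congr 1; ring
  have eB2 : exp (-(c*(A+B)/2)) * exp (-((B-A)/2)) = exp ((-((1+c)/2))*(A+B)) * exp A := by
    rw [← exp_add, ← exp_add]; congr 1; ring
  nlinarith [hmul, eA1, eA2, eB1, eB2]

lemma aux14_dia {p q α b : ℝ} (hp : 0 < p) (hpq : 1 ≤ p + q) (h3 : 2 ≤ 3*p + q)
    (hα : 0 < α) (hab : α ≤ b) :
    0 ≤ (α^p + b^p)*(b^(p-1) - α^(p-1)) + (p+q)*(b-α)*(α^(p-1)*b^(p-1)) := by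
  have hb : 0 < b := lt_of_lt_of_le hα hab
  set X := α^(p-1) with hX
  set Y := b^(p-1) with hY
  have hXpos : 0 < X := rpow_pos_of_pos hα _
  have hYpos : 0 < Y := rpow_pos_of_pos hb _
  have hap : α^p = X*α := by rw [hX, ← Real.rpow_add_one hα.ne' (p-1)]; ring_nf
  have hbp : b^p = Y*b := by rw [hY, ← Real.rpow_add_one hb.ne' (p-1)]; ring_nf
  have hred : (α^p + b^p)*(b^(p-1) - α^(p-1)) + (p+q)*(b-α)*(α^(p-1)*b^(p-1))
      = (Y*Y*b - X*X*α) + (p+q-1)*((b-α)*(X*Y)) := by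
    rw [hap, hbp, ← hX, ← hY]; ring
  rw [hred]
  have hXXa : X*X*α = α^(2*p-1) := by
    rw [hX, ← Real.rpow_add hα, ← Real.rpow_add_one hα.ne']; ring_nf
  have hYYb : Y*Y*b = b^(2*p-1) := by
    rw [hY, ← Real.rpow_add hb, ← Real.rpow_add_one hb.ne']; ring_nf
  have hr : 1 - 2*p ≤ p + q - 1 := by linarith
  have hbαXY : 0 ≤ (b-α)*(X*Y) := mul_nonneg (sub_nonneg.2 hab) (mul_pos hXpos hYpos).le
  rcases le_or_gt (1/2 : ℝ) p with hphalf | hphalf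
  · -- easy case: 2p-1 ≥ 0
    have h1 : X*X*α ≤ Y*Y*b := by
      rw [hXXa, hYYb]
      exact Real.rpow_le_rpow hα.le hab (by linarith)
    nlinarith
  · -- hard case: use the sinh inequality
    set c := 1 - 2*p with hc
    have hc0 : 0 ≤ c := by rw [hc]; linarith
    have hc1 : c ≤ 1 := by rw [hc]; linarith
    set A := Real.log α with hA
    set B := Real.log b with hB
    have hAB : A ≤ B := Real.log_le_log hα hab
    have key := aux14_exp2 hc0 hc1 hAB
    have eα : exp A = α := Real.exp_log hα
    have eβ : exp B = b := Real.exp_log hb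
    have hXe : X = exp ((p-1)*A) := by
      rw [hX, Real.rpow_def_of_pos hα, hA]; ring_nf
    have hYe : Y = exp ((p-1)*B) := by
      rw [hY, Real.rpow_def_of_pos hb, hB]; ring_nf
    have hXXe : X*X*α = exp (-(c*A)) := by
      rw [hXXa, Real.rpow_def_of_pos hα]; congr 1; rw [hc]; ring
    have hYYe : Y*Y*b = exp (-(c*B)) := by
      rw [hYYb, Real.rpow_def_of_pos hb]; congr 1; rw [hc]; ring
    have hXYe : X*Y = exp ((-((1+c)/2))*(A+B)) := by
      rw [hXe, hYe, ← exp_add]; congr 1; rw [hc]; ring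
    -- key : exp(-(cA)) - exp(-(cB)) ≤ c * exp(..) * (exp B - exp A)
    rw [← hXXe, ← hYYe, ← hXYe, eα, eβ] at key
    -- key : X*X*α - Y*Y*b ≤ c * (X*Y) * (b - α)
    nlinarith

noncomputable def phiF (p q b α : ℝ) : ℝ :=
  (1 - q * b^(p-1) * (b-α) / (α^p + b^p)) * ((α^p + b^p)/2)^(-(q/p))

lemma aux14_phi_deriv {p q b : ℝ} (hp : 0 < p) (hb : 0 < b) {α : ℝ} (hα : 0 < α) :
    HasDerivAt (phiF p q b)
      (((α^p + b^p)/2)^(-(q/p)) * q / (α^p+b^p)^2 *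
        ((α^p + b^p)*(b^(p-1) - α^(p-1)) + (p+q)*(b-α)*(α^(p-1)*b^(p-1)))) α := by
  have hSpos : (0:ℝ) < α^p + b^p := by positivity
  have hS : HasDerivAt (fun x : ℝ => x^p + b^p) (p*α^(p-1)) α :=
    (Real.hasDerivAt_rpow_const (Or.inl hα.ne')).add_const _
  have hN : HasDerivAt (fun x : ℝ => q * b^(p-1) * (b-x)) ((q*b^(p-1)) * (-1)) α :=
    HasDerivAt.const_mul (q * b^(p-1)) ((hasDerivAt_id α).const_sub b)
  have hQ := hN.div hS hSpos.ne'
  have h1 := hQ.const_sub 1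
  have hG : HasDerivAt (fun x : ℝ => ((x^p + b^p)/2)^(-(q/p)))
      ((-(q/p)) * ((α^p+b^p)/2)^(-(q/p)-1) * (p*α^(p-1)/2)) α := by
    have h2 := (hS.div_const 2).rpow_const (p := -(q/p)) (Or.inl (by positivity))
    convert h2 using 1
    ring
  have hprod := h1.mul hG
  refine hprod.congr_deriv ?_
  have hpow : ((α^p+b^p)/2)^(-(q/p)-1)
      = ((α^p+b^p)/2)^(-(q/p)) * ((α^p+b^p)/2)⁻¹ := by
    rw [show -(q/p)-1 = -(q/p) + (-1) by ring, Real.rpow_add (by positivity),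
      Real.rpow_neg_one]
  rw [hpow]
  simp only [Pi.div_apply]
  have hpne : p ≠ 0 := hp.ne'
  have hSne : (α^p + b^p) ≠ 0 := hSpos.ne'
  field_simp
  ring

lemma aux14_phi_mono {p q b : ℝ} (hp : 0 < p) (hq : 0 < q) (hb : 0 < b)
    (hpq : 1 ≤ p + q) (h3 : 2 ≤ 3*p + q) :
    MonotoneOn (phiF p q b) (Icc (0:ℝ) b) := by
  have hrp : Continuous fun x : ℝ => x^p :=
    continuous_iff_continuousAt.mpr (fun x => Real.continuousAt_rpow_const x p (Or.inr hp.le))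
  have hS : Continuous fun x : ℝ => x^p + b^p := hrp.add continuous_const
  have hSpos : ∀ x ∈ Icc (0:ℝ) b, (0:ℝ) < x^p + b^p := by
    intro x hx
    have : (0:ℝ) ≤ x^p := Real.rpow_nonneg hx.1 p
    have : (0:ℝ) < b^p := Real.rpow_pos_of_pos hb p
    linarith
  apply monotoneOn_of_deriv_nonneg (convex_Icc 0 b)
  · apply ContinuousOn.mul
    · apply ContinuousOn.sub continuousOn_const
      apply ContinuousOn.div
      · exact (Continuous.continuousOn (by continuity))
      · exact hS.continuousOn
      · exact fun x hx => (hSpos x hx).ne'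
    · intro x hx
      have hcs : ContinuousAt (fun x : ℝ => (x^p + b^p)/2) x := (hS.continuousAt).div_const 2
      have : ContinuousAt (fun x : ℝ => ((x^p + b^p)/2)^(-(q/p))) x :=
        ContinuousAt.rpow_const hcs (Or.inl (div_pos (hSpos x hx) two_pos).ne')
      exact this.continuousWithinAt
  · rw [interior_Icc]
    intro x hx
    exact (aux14_phi_deriv hp hb hx.1).differentiableAt.differentiableWithinAt
  · rw [interior_Icc]
    intro x hx
    rw [(aux14_phi_deriv hp hb hx.1).deriv]
    apply mul_nonneg
    · apply div_nonneg _ (by positivity)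
      have h1 : (0:ℝ) ≤ x^p := Real.rpow_nonneg hx.1.le p
      have h2 : (0:ℝ) ≤ b^p := Real.rpow_nonneg hb.le p
      exact mul_nonneg (Real.rpow_nonneg (by linarith) _) hq.le
    · exact aux14_dia hp hpq h3 hx.1 hx.2.le


lemma aux14_D_deriv {p q α : ℝ} (hp : 0 < p) (hα : 0 ≤ α) {β : ℝ} (hβ : 0 < β) :
    HasDerivAt (fun x : ℝ => (x - α) * ((α^p + x^p)/2)^(-(q/p))) (phiF p q β α) β := by
  have h1 : (0:ℝ) ≤ α^p := Real.rpow_nonneg hα p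
  have h2 : (0:ℝ) < β^p := Real.rpow_pos_of_pos hβ p
  have hSpos : (0:ℝ) < α^p + β^p := by linarith
  have hS : HasDerivAt (fun x : ℝ => α^p + x^p) (p*β^(p-1)) β :=
    (Real.hasDerivAt_rpow_const (Or.inl hβ.ne')).const_add _
  have hG := (hS.div_const 2).rpow_const (p := -(q/p)) (Or.inl (div_pos hSpos two_pos).ne')
  have hlin : HasDerivAt (fun x : ℝ => x - α) 1 β := (hasDerivAt_id β).sub_const α
  have hprod := hlin.mul hG
  refine hprod.congr_deriv ?_
  have hpow : ((α^p+β^p)/2)^(-(q/p)-1)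
      = ((α^p+β^p)/2)^(-(q/p)) * ((α^p+β^p)/2)⁻¹ := by
    rw [show -(q/p)-1 = -(q/p) + (-1) by ring, Real.rpow_add (by positivity),
      Real.rpow_neg_one]
  unfold phiF
  rw [hpow]
  have hpne : p ≠ 0 := hp.ne'
  field_simp
  ring

lemma aux14_L3div {p q : ℝ} (hp : 0 < p) (hq : 0 < q) (hpq : 1 ≤ p + q) (h3 : 2 ≤ 3*p + q)
    {a c b : ℝ} (ha : 0 ≤ a) (hac : a ≤ c) (hc : 0 < c) (hcb : c ≤ b) :
    (b-a) * ((a^p + b^p)/2)^(-(q/p)) ≤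
      (c-a) * ((a^p + c^p)/2)^(-(q/p)) + (b-c) * ((c^p + b^p)/2)^(-(q/p)) := by
  set h : ℝ → ℝ := fun β => (c-a) * ((a^p + c^p)/2)^(-(q/p))
      + (β-c)*((c^p+β^p)/2)^(-(q/p)) - (β-a)*((a^p+β^p)/2)^(-(q/p)) with hh
  have hmono : MonotoneOn h (Ici c) := by
    have hrp : Continuous fun x : ℝ => x^p :=
      continuous_iff_continuousAt.mpr (fun x => Real.continuousAt_rpow_const x p (Or.inr hp.le))
    apply monotoneOn_of_deriv_nonneg (convex_Ici c)
    · apply ContinuousOn.sub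
      apply ContinuousOn.add continuousOn_const
      · apply ContinuousOn.mul ((continuous_id.sub continuous_const).continuousOn)
        intro x hx
        have hx0 : (0:ℝ) < c^p := Real.rpow_pos_of_pos hc p
        have hx1 : (0:ℝ) ≤ x^p := Real.rpow_nonneg (le_trans hc.le hx) p
        have hb : ContinuousAt (fun x : ℝ => (c^p + x^p)/2) x :=
          ((continuous_const.add hrp).continuousAt).div_const 2
        exact (ContinuousAt.rpow_const hb (Or.inl (by positivity))).continuousWithinAt
      · apply ContinuousOn.mul ((continuous_id.sub continuous_const).continuousOn)
        intro x hx
        have hx0 : (0:ℝ) ≤ a^p := Real.rpow_nonneg ha p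
        have hx1 : (0:ℝ) < x^p := Real.rpow_pos_of_pos (lt_of_lt_of_le hc hx) p
        have hb : ContinuousAt (fun x : ℝ => (a^p + x^p)/2) x :=
          ((continuous_const.add hrp).continuousAt).div_const 2
        exact (ContinuousAt.rpow_const hb (Or.inl (by positivity))).continuousWithinAt
    · rw [interior_Ici]
      intro x hx
      have hx0 : (0:ℝ) < x := lt_of_le_of_lt hc.le hx
      exact (((aux14_D_deriv hp (ha.trans hac) hx0).const_add _).sub
        (aux14_D_deriv hp ha hx0)).differentiableAt.differentiableWithinAt
    · rw [interior_Ici]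
      intro x hx
      have hcx : c < x := hx
      have hx0 : (0:ℝ) < x := lt_of_le_of_lt hc.le hx
      have hd := ((aux14_D_deriv (q := q) hp (ha.trans hac) hx0).const_add
        ((c-a) * ((a^p + c^p)/2)^(-(q/p)))).sub (aux14_D_deriv (q := q) hp ha hx0)
      rw [show deriv h x = _ from hd.deriv]
      have := aux14_phi_mono (b := x) hp hq hx0 hpq h3
        (show a ∈ Icc (0:ℝ) x by constructor <;> [exact ha; linarith])
        (show c ∈ Icc (0:ℝ) x by constructor <;> [linarith [ha]; linarith]) hac
      linarith
  have h1 : h c ≤ h b := hmono self_mem_Ici (by exact hcb) hcb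
  have h2 : h c = 0 := by rw [hh]; ring
  rw [h2] at h1
  rw [hh] at h1
  dsimp at h1
  linarith

noncomputable def FM (p q a b : ℝ) : ℝ := ((a^p + b^p)/2)^(q/p)

section Flemmas
variable {p q : ℝ} (hp : 0 < p) (hq : 0 < q)

lemma FM_symm (a b : ℝ) : FM p q a b = FM p q b a := by unfold FM; rw [add_comm]

lemma FM_nonneg {a b : ℝ} (ha : 0 ≤ a) (hb : 0 ≤ b) : 0 ≤ FM p q a b := by
  unfold FM
  have h1 : (0:ℝ) ≤ a^p := Real.rpow_nonneg ha p
  have h2 : (0:ℝ) ≤ b^p := Real.rpow_nonneg hb p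
  exact Real.rpow_nonneg (by linarith) _

include hp in
lemma FM_pos {a b : ℝ} (ha : 0 ≤ a) (hb : 0 ≤ b) (hab : 0 < a + b) : 0 < FM p q a b := by
  unfold FM
  have h1 : (0:ℝ) ≤ a^p := Real.rpow_nonneg ha p
  have h2 : (0:ℝ) ≤ b^p := Real.rpow_nonneg hb p
  have : (0:ℝ) < a^p + b^p := by
    rcases lt_or_ge 0 a with h | h
    · have := Real.rpow_pos_of_pos h p; linarith
    · have hb0 : 0 < b := by linarith
      have := Real.rpow_pos_of_pos hb0 p; linarith
  exact Real.rpow_pos_of_pos (by linarith) _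

include hp hq in
lemma FM_mono2 {a b b' : ℝ} (ha : 0 ≤ a) (hb : 0 ≤ b) (hbb : b ≤ b') :
    FM p q a b ≤ FM p q a b' := by
  unfold FM
  have h2 : b^p ≤ b'^p := Real.rpow_le_rpow hb hbb hp.le
  have h1 : (0:ℝ) ≤ a^p := Real.rpow_nonneg ha p
  have h3 : (0:ℝ) ≤ b^p := Real.rpow_nonneg hb p
  exact Real.rpow_le_rpow (by linarith) (by linarith) (by positivity)

include hp hq in
lemma FM_mono1 {a a' b : ℝ} (hb : 0 ≤ b) (ha : 0 ≤ a) (haa : a ≤ a') :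
    FM p q a b ≤ FM p q a' b := by
  rw [FM_symm a b, FM_symm a' b]; exact FM_mono2 hp hq hb ha haa

include hp in
lemma FM_diag {a : ℝ} (ha : 0 ≤ a) : FM p q a a = a^q := by
  unfold FM
  rw [show (a^p + a^p)/2 = a^p by ring, ← Real.rpow_mul ha]
  congr 1
  field_simp

include hp hq in
/-- moderate monotonicity: `r ↦ r / FM r s` is increasing. -/
lemma FM_moderate {r r' s : ℝ} (hq1 : q ≤ 1) (hr : 0 ≤ r) (hrr : r ≤ r') (hs : 0 ≤ s) :
    r * FM p q r' s ≤ r' * FM p q r s := by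
  rcases eq_or_lt_of_le hr with h0 | hrpos
  · rw [← h0, zero_mul]
    exact mul_nonneg (hr.trans hrr) (FM_nonneg le_rfl hs)
  have hr'pos : 0 < r' := lt_of_lt_of_le hrpos hrr
  have hratio : 1 ≤ r'/r := (one_le_div hrpos).2 hrr
  have key : FM p q r' s ≤ (r'/r) * FM p q r s := by
    have step1 : FM p q r' s ≤ ((r'/r)^p * ((r^p + s^p)/2))^(q/p) := by
      unfold FM
      apply Real.rpow_le_rpow
      · have h1 : (0:ℝ) ≤ r'^p := Real.rpow_nonneg (by linarith) p
        have h2 : (0:ℝ) ≤ s^p := Real.rpow_nonneg hs p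
        linarith
      · have hpow1 : (r'/r)^p * r^p = r'^p := by
          rw [← Real.mul_rpow (by positivity) hr]
          rw [div_mul_cancel₀ _ hrpos.ne']
        have hpow2 : (1:ℝ) ≤ (r'/r)^p := by
          have := Real.rpow_le_rpow (by norm_num) hratio hp.le
          simpa using this
        have h2 : (0:ℝ) ≤ s^p := Real.rpow_nonneg hs p
        nlinarith
      · positivity
    have step2 : ((r'/r)^p * ((r^p + s^p)/2))^(q/p)
        = (r'/r)^q * FM p q r s := by
      unfold FM
      rw [Real.mul_rpow (by positivity) (by
        have h1 : (0:ℝ) ≤ r^p := Real.rpow_nonneg hr p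
        have h2 : (0:ℝ) ≤ s^p := Real.rpow_nonneg hs p
        linarith)]
      congr 1
      rw [← Real.rpow_mul (by positivity)]
      congr 1
      field_simp
    have step3 : (r'/r)^q ≤ r'/r := by
      calc (r'/r)^q ≤ (r'/r)^(1:ℝ) := Real.rpow_le_rpow_of_exponent_le hratio hq1
      _ = r'/r := Real.rpow_one _
    calc FM p q r' s ≤ (r'/r)^q * FM p q r s := by rw [← step2]; exact step1
    _ ≤ (r'/r) * FM p q r s :=
        mul_le_mul_of_nonneg_right step3 (FM_nonneg hr hs)
  calc r * FM p q r' s ≤ r * ((r'/r) * FM p q r s) :=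
        mul_le_mul_of_nonneg_left key hr
  _ = r' * FM p q r s := by field_simp

include hp hq in
lemma FM_abq {a b : ℝ} (hq1 : q ≤ 1) (ha : 0 ≤ a) (hab : a ≤ b) :
    a * b^q ≤ b * a^q := by
  rcases eq_or_lt_of_le ha with h0 | hapos
  · rw [← h0, zero_mul]
    exact mul_nonneg (ha.trans hab) (Real.rpow_nonneg le_rfl q)
  have hb : 0 < b := lt_of_lt_of_le hapos hab
  have hratio : 1 ≤ b/a := (one_le_div hapos).2 hab
  have h1 : b^q = (b/a)^q * a^q := by
    rw [← Real.mul_rpow (div_nonneg hb.le ha) ha, div_mul_cancel₀ _ hapos.ne']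
  have h2 : (b/a)^q ≤ b/a := by
    calc (b/a)^q ≤ (b/a)^(1:ℝ) := Real.rpow_le_rpow_of_exponent_le hratio hq1
    _ = b/a := Real.rpow_one _
  have h3 : (0:ℝ) < a^q := Real.rpow_pos_of_pos hapos q
  rw [h1]
  calc a * ((b/a)^q * a^q) ≤ a * ((b/a) * a^q) :=
        mul_le_mul_of_nonneg_left (mul_le_mul_of_nonneg_right h2 h3.le) hapos.le
  _ = b * a^q := by field_simp

end Flemmas

lemma aux14_L3prod {p q : ℝ} (hp : 0 < p) (hq : 0 < q) (hpq : 1 ≤ p + q) (h3 : 2 ≤ 3*p + q)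
    {a c b : ℝ} (ha : 0 ≤ a) (hac : a ≤ c) (hcb : c ≤ b) :
    (b-a) * (FM p q a c * FM p q c b) ≤
      ((c-a) * FM p q c b + (b-c) * FM p q a c) * FM p q a b := by
  rcases eq_or_lt_of_le (ha.trans hac) with h0 | hcpos
  · -- c = 0, hence a = 0 : FM a c = 0
    have hc0 : c = 0 := h0.symm
    have ha0 : a = 0 := le_antisymm (hc0 ▸ hac) ha
    have hF0 : FM p q a c = 0 := by
      rw [ha0, hc0]
      unfold FM
      rw [show ((0:ℝ)^p + 0^p)/2 = 0 by rw [Real.zero_rpow hp.ne']; ring]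
      exact Real.zero_rpow (by positivity)
    rw [hF0]
    simp [ha0, hc0]
  · have hb : 0 < b := lt_of_lt_of_le hcpos hcb
    have hP : 0 < FM p q a c := FM_pos hp ha hcpos.le (by linarith)
    have hQ : 0 < FM p q c b := FM_pos hp hcpos.le hb.le (by linarith)
    have hR : 0 < FM p q a b := FM_pos hp ha hb.le (by linarith)
    have hdiv := aux14_L3div hp hq hpq h3 ha hac hcpos hcb
    have hconv : ∀ x y : ℝ, 0 ≤ x → y * ((x)/2)^(-(q/p)) = y / ((x)/2)^(q/p) := by
      intro x y hx
      rw [Real.rpow_neg (by positivity)]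
      ring
    have e1 : (b-a) * ((a^p + b^p)/2)^(-(q/p)) = (b-a) / FM p q a b := by
      apply hconv
      have := Real.rpow_nonneg ha p; have := Real.rpow_nonneg hb.le p; linarith
    have e2 : (c-a) * ((a^p + c^p)/2)^(-(q/p)) = (c-a) / FM p q a c := by
      apply hconv
      have := Real.rpow_nonneg ha p; have := Real.rpow_nonneg hcpos.le p; linarith
    have e3 : (b-c) * ((c^p + b^p)/2)^(-(q/p)) = (b-c) / FM p q c b := by
      apply hconv
      have := Real.rpow_nonneg hcpos.le p; have := Real.rpow_nonneg hb.le p; linarith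
    rw [e1, e2, e3] at hdiv
    rw [div_add_div _ _ hP.ne' hQ.ne', div_le_div_iff₀ hR (mul_pos hP hQ)] at hdiv
    calc (b-a) * (FM p q a c * FM p q c b) ≤ ((c-a) * FM p q c b + (b-c) * FM p q a c) * FM p q a b := by
          linarith [hdiv]
    _ = _ := by ring


lemma aux14_key_ord {p q : ℝ} (hp : 0 < p) (hq : 0 < q) (hq1 : q ≤ 1)
    (hpq : 1 ≤ p + q) (h3 : 2 ≤ 3*p + q)
    {a b c u v w : ℝ} (ha : 0 ≤ a) (hb : 0 ≤ b) (hc : 0 ≤ c)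
    (hu : 0 ≤ u) (hv : 0 ≤ v) (hw : 0 ≤ w)
    (hab0 : 0 < a + b) (hac0 : 0 < a + c) (hcb0 : 0 < c + b) (hAB : a ≤ b)
    (tri : u ≤ v + w) (pt : c*u ≤ b*v + a*w) :
    u / FM p q a b ≤ v / FM p q a c + w / FM p q c b := by
  have hbpos : 0 < b := by linarith
  have hP : 0 < FM p q a c := FM_pos hp ha hc hac0
  have hQ : 0 < FM p q c b := FM_pos hp hc hb hcb0
  have hR : 0 < FM p q a b := FM_pos hp ha hb hab0
  set P := FM p q a c with hPdef
  set Q := FM p q c b with hQdef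
  set R := FM p q a b with hRdef
  rw [div_add_div _ _ hP.ne' hQ.ne', div_le_div_iff₀ hR (mul_pos hP hQ)]
  rw [show P*w = w*P from mul_comm P w]
  rcases le_or_gt c a with hca | hac'
  · -- Case A : c ≤ a ≤ b
    have hPR : P ≤ R := FM_mono2 hp hq ha hc (hca.trans hAB)
    have hQR : Q ≤ R := FM_mono1 hp hq hb hc hca
    calc u * (P*Q) ≤ (v+w)*(P*Q) := mul_le_mul_of_nonneg_right tri (mul_pos hP hQ).le
    _ = v*(P*Q) + w*(P*Q) := by ring
    _ ≤ v*(R*Q) + w*(P*R) := by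
        have t1 : v*(P*Q) ≤ v*(R*Q) :=
          mul_le_mul_of_nonneg_left (mul_le_mul_of_nonneg_right hPR hQ.le) hv
        have t2 : w*(P*Q) ≤ w*(P*R) :=
          mul_le_mul_of_nonneg_left (mul_le_mul_of_nonneg_left hQR hP.le) hw
        linarith
    _ = (v*Q + w*P)*R := by ring
  · rcases le_or_gt b c with hbc | hcb'
    · -- Case B : a ≤ b ≤ c
      have hcpos : 0 < c := lt_of_lt_of_le hbpos hbc
      have m1 : b * P ≤ c * R := by
        have := FM_moderate hp hq hq1 hb hbc ha
        rwa [FM_symm (p := p) (q := q) c a, FM_symm (p := p) (q := q) b a] at this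
      have m2 : a * Q ≤ c * R := FM_moderate hp hq hq1 ha (by linarith) hb
      have big : c * (u * (P*Q)) ≤ c * ((v*Q + w*P)*R) := by
        calc c*(u*(P*Q)) = (c*u)*(P*Q) := by ring
        _ ≤ (b*v + a*w)*(P*Q) := mul_le_mul_of_nonneg_right pt (mul_pos hP hQ).le
        _ = v*((b*P)*Q) + w*((a*Q)*P) := by ring
        _ ≤ v*((c*R)*Q) + w*((c*R)*P) := by
            have t1 : v*((b*P)*Q) ≤ v*((c*R)*Q) :=
              mul_le_mul_of_nonneg_left (mul_le_mul_of_nonneg_right m1 hQ.le) hv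
            have t2 : w*((a*Q)*P) ≤ w*((c*R)*P) :=
              mul_le_mul_of_nonneg_left (mul_le_mul_of_nonneg_right m2 hP.le) hw
            linarith
        _ = c*((v*Q + w*P)*R) := by ring
      exact le_of_mul_le_mul_left big hcpos
    · -- Case C : a < c < b  (in fact a ≤ c ≤ b suffices)
      have hcpos : 0 < c := lt_of_le_of_lt ha hac'
      have hLP : a^q ≤ P := by
        rw [← FM_diag (q := q) hp ha, hPdef]
        exact FM_mono2 hp hq ha ha hac'.le
      have hQb : Q ≤ b^q := by
        rw [← FM_diag (q := q) hp hb, hQdef]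
        exact FM_mono1 hp hq hb hcpos.le hcb'.le
      have habq : a * b^q ≤ b * a^q := FM_abq hp hq hq1 ha hAB
      have hbPaQ : a * Q ≤ b * P :=
        calc a*Q ≤ a*b^q := mul_le_mul_of_nonneg_left hQb ha
        _ ≤ b*a^q := habq
        _ ≤ b*P := mul_le_mul_of_nonneg_left hLP hb
      have hQP : P ≤ Q := by
        rw [hPdef, hQdef, FM_symm (p := p) (q := q) a c]
        exact FM_mono2 hp hq hcpos.le ha hAB
      have L3 := aux14_L3prod hp hq hpq h3 ha hac'.le hcb'.le
      have hba : 0 < b - a := by linarith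
      have mainchain : (b-a)*(u*(P*Q)) ≤ (b-a)*((v*Q + w*P)*R) := by
        set lam := R*(b*P - a*Q) with hlam
        set mu := R*(Q - P) with hmu
        have hlam0 : 0 ≤ lam := mul_nonneg hR.le (by linarith)
        have hmu0 : 0 ≤ mu := mul_nonneg hR.le (by linarith)
        calc (b-a)*(u*(P*Q)) = u*((b-a)*(P*Q)) := by ring
        _ ≤ u*(((c-a)*Q + (b-c)*P)*R) := mul_le_mul_of_nonneg_left L3 hu
        _ = u*lam + (c*u)*mu := by rw [hlam, hmu]; ring
        _ ≤ (v+w)*lam + (b*v + a*w)*mu := by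
            have t1 : u*lam ≤ (v+w)*lam := mul_le_mul_of_nonneg_right tri hlam0
            have t2 : (c*u)*mu ≤ (b*v + a*w)*mu := mul_le_mul_of_nonneg_right pt hmu0
            linarith
        _ = v*(lam + b*mu) + w*(lam + a*mu) := by ring
        _ = (b-a)*((v*Q + w*P)*R) := by rw [hlam, hmu]; ring
      exact le_of_mul_le_mul_left (by linarith [mainchain]) hba

lemma aux14_key {p q : ℝ} (hp : 0 < p) (hq : 0 < q) (hq1 : q ≤ 1)
    (hpq : 1 ≤ p + q) (h3 : 2 ≤ 3*p + q)
    {a b c u v w : ℝ} (ha : 0 ≤ a) (hb : 0 ≤ b) (hc : 0 ≤ c)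
    (hu : 0 ≤ u) (hv : 0 ≤ v) (hw : 0 ≤ w)
    (hab0 : 0 < a + b) (hac0 : 0 < a + c) (hcb0 : 0 < c + b)
    (tri : u ≤ v + w) (pt : c*u ≤ b*v + a*w) :
    u / FM p q a b ≤ v / FM p q a c + w / FM p q c b := by
  rcases le_total a b with hAB | hBA
  · exact aux14_key_ord hp hq hq1 hpq h3 ha hb hc hu hv hw hab0 hac0 hcb0 hAB tri pt
  · have := aux14_key_ord hp hq hq1 hpq h3 hb ha hc hu hw hv
      (by linarith) (by linarith) (by linarith) hBA
      (by linarith) (by linarith [pt])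
    rw [FM_symm (p := p) (q := q) b a, FM_symm (p := p) (q := q) b c, FM_symm (p := p) (q := q) c a] at this
    linarith [this]

end Aux14


/-- For `0 < q ≤ 1` and `p ≥ max{1−q, (2−q)/3}`, the `(p,q)`-relative distance
`ρ_{p,q}(x,y) = |x−y| / A_p(|x|,|y|)^q` is a metric on `ℝⁿ`
(with `ρ_{p,q}(0,0) = 0`, as `0/0 = 0` in Lean). -/
theorem stmt_14 (n : ℕ) (p q : ℝ) (hq0 : 0 < q) (hq1 : q ≤ 1)
    (hp : max (1 - q) ((2 - q) / 3) ≤ p) :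
    let ρ : EuclideanSpace ℝ (Fin n) → EuclideanSpace ℝ (Fin n) → ℝ :=
      fun x y => ‖x - y‖ / ((‖x‖ ^ p + ‖y‖ ^ p) / 2) ^ (q / p)
    (∀ x y, 0 ≤ ρ x y) ∧ (∀ x y, ρ x y = ρ y x) ∧
    (∀ x y, ρ x y = 0 ↔ x = y) ∧
    (∀ x y z, ρ x y ≤ ρ x z + ρ z y) := by
  have hp1 : 1 - q ≤ p := le_of_max_le_left hp
  have hp2 : (2 - q)/3 ≤ p := le_of_max_le_right hp
  have hp0 : 0 < p := by linarith
  have hpq : 1 ≤ p + q := by linarith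
  have h3 : 2 ≤ 3*p + q := by linarith
  intro ρ
  have hnonneg : ∀ x y : EuclideanSpace ℝ (Fin n), 0 ≤ ρ x y := by
    intro x y
    show (0:ℝ) ≤ ‖x - y‖ / ((‖x‖^p + ‖y‖^p)/2)^(q/p)
    positivity
  have hpos : ∀ x y : EuclideanSpace ℝ (Fin n), x ≠ y → 0 < ρ x y := by
    intro x y hxy
    show (0:ℝ) < ‖x - y‖ / ((‖x‖^p + ‖y‖^p)/2)^(q/p)
    have hnum : 0 < ‖x - y‖ := by
      rw [norm_pos_iff, sub_ne_zero]; exact hxy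
    have hsum : 0 < ‖x‖ + ‖y‖ := by
      by_contra h
      push_neg at h
      have hx0 : ‖x‖ = 0 := le_antisymm (by nlinarith [norm_nonneg x, norm_nonneg y]) (norm_nonneg x)
      have hy0 : ‖y‖ = 0 := le_antisymm (by nlinarith [norm_nonneg x, norm_nonneg y]) (norm_nonneg y)
      rw [norm_eq_zero] at hx0 hy0
      exact hxy (hx0.trans hy0.symm)
    have hden : (0:ℝ) < ((‖x‖^p + ‖y‖^p)/2)^(q/p) :=
      FM_pos hp0 (norm_nonneg x) (norm_nonneg y) hsum
    exact div_pos hnum hden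
  refine ⟨hnonneg, ?_, ?_, ?_⟩
  · intro x y
    show ‖x - y‖ / ((‖x‖^p + ‖y‖^p)/2)^(q/p) = ‖y - x‖ / ((‖y‖^p + ‖x‖^p)/2)^(q/p)
    rw [norm_sub_rev, add_comm (‖x‖^p) (‖y‖^p)]
  · intro x y
    constructor
    · intro h
      by_contra hxy
      exact absurd h (ne_of_gt (hpos x y hxy))
    · intro h
      subst h
      show ‖x - x‖ / ((‖x‖^p + ‖x‖^p)/2)^(q/p) = 0
      simp
  · intro x y z
    by_cases hxy : x = y
    · subst hxy
      have : ρ x x = 0 := by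
        show ‖x - x‖ / ((‖x‖^p + ‖x‖^p)/2)^(q/p) = 0
        simp
      rw [this]
      exact add_nonneg (hnonneg x z) (hnonneg z x)
    by_cases hxz : x = z
    · subst hxz
      have : ρ x x = 0 := by
        show ‖x - x‖ / ((‖x‖^p + ‖x‖^p)/2)^(q/p) = 0
        simp
      rw [this, zero_add]
    by_cases hzy : z = y
    · subst hzy
      have : ρ z z = 0 := by
        show ‖z - z‖ / ((‖z‖^p + ‖z‖^p)/2)^(q/p) = 0
        simp
      rw [this, add_zero]
    -- main case
    show ‖x - y‖ / FM p q ‖x‖ ‖y‖ ≤ ‖x - z‖ / FM p q ‖x‖ ‖z‖ + ‖z - y‖ / FM p q ‖z‖ ‖y‖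
    have hsum : ∀ (u v : EuclideanSpace ℝ (Fin n)), u ≠ v → 0 < ‖u‖ + ‖v‖ := by
      intro u v huv
      by_contra h
      push_neg at h
      have hx0 : ‖u‖ = 0 := le_antisymm (by nlinarith [norm_nonneg u, norm_nonneg v]) (norm_nonneg u)
      have hy0 : ‖v‖ = 0 := le_antisymm (by nlinarith [norm_nonneg u, norm_nonneg v]) (norm_nonneg v)
      rw [norm_eq_zero] at hx0 hy0
      exact huv (hx0.trans hy0.symm)
    have tri : ‖x - y‖ ≤ ‖x - z‖ + ‖z - y‖ := by
      have := dist_triangle x z y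
      simpa [dist_eq_norm] using this
    have pt : ‖z‖ * ‖x - y‖ ≤ ‖y‖ * ‖x - z‖ + ‖x‖ * ‖z - y‖ := by
      have hpt := EuclideanGeometry.mul_dist_le_mul_dist_add_mul_dist x (0 : EuclideanSpace ℝ (Fin n)) y z
      simp only [dist_eq_norm, dist_zero_left, dist_zero_right, sub_zero, zero_sub, norm_neg] at hpt
      calc ‖z‖ * ‖x - y‖ = ‖x - y‖ * ‖z‖ := by ring
      _ ≤ ‖x‖ * ‖y - z‖ + ‖y‖ * ‖x - z‖ := by linarith [hpt]
      _ = ‖y‖ * ‖x - z‖ + ‖x‖ * ‖z - y‖ := by rw [norm_sub_rev z y]; ring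
    exact aux14_key hp0 hq0 hq1 hpq h3 (norm_nonneg x) (norm_nonneg y) (norm_nonneg z)
      (norm_nonneg _) (norm_nonneg _) (norm_nonneg _)
      (hsum x y hxy) (hsum x z hxz) (by
        have := hsum z y hzy; linarith)
      tri pt
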